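/- Let F be a field and let A be an m×m matrix over F with m ≥ 1 such that A − Aᵀ is invertible. Then there is no invertible m×m matrix S, scalar c ∈ F, and (m−1)×(m−1) matrix G such that SᵀAS = [c] ⊕ G, where [c] ⊕ G denotes the block-diagonal matrix with the 1×1 block (c) followed by the block G. -/
import Mathlib

open Matrix

/-- If `A` is an `m × m` matrix (`m ≥ 1`, realized as size `1 + m'`) such that `A - Aᵀ`
is invertible, then no congruence transformation `SᵀAS` with `S` invertible yields a
block-diagonal matrix `[c] ⊕ G` with a `1 × 1` leading block. -/
theorem no_one_dim_summand_of_skew_part_invertible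
    {F : Type*} [Field F] {m : ℕ}
    (A : Matrix (Fin 1 ⊕ Fin m) (Fin 1 ⊕ Fin m) F)
    (hA : IsUnit (A - Aᵀ)) :
    ¬ ∃ (S : Matrix (Fin 1 ⊕ Fin m) (Fin 1 ⊕ Fin m) F) (c : F)
        (G : Matrix (Fin m) (Fin m) F),
        IsUnit S ∧ Sᵀ * A * S = Matrix.fromBlocks !![c] 0 0 G := by
  rintro ⟨S, c, G, hS, hB⟩
  have h1 : IsUnit Sᵀ := by
    rw [Matrix.isUnit_iff_isUnit_det, Matrix.det_transpose,
      ← Matrix.isUnit_iff_isUnit_det]; exact hS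
  have hU : IsUnit (Sᵀ * (A - Aᵀ) * S) := (h1.mul hA).mul hS
  have key : Sᵀ * (A - Aᵀ) * S = Matrix.fromBlocks (!![c] - !![c]ᵀ) 0 0 (G - Gᵀ) := by
    have h2 : Sᵀ * (A - Aᵀ) * S = (Sᵀ * A * S) - (Sᵀ * A * S)ᵀ := by
      simp [Matrix.mul_sub, Matrix.sub_mul, Matrix.transpose_mul, Matrix.mul_assoc]
    rw [h2, hB]
    rw [Matrix.fromBlocks_transpose, sub_eq_add_neg, sub_eq_add_neg, sub_eq_add_neg,
      Matrix.fromBlocks_neg, Matrix.fromBlocks_add]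
    simp
  rw [key, Matrix.isUnit_iff_isUnit_det, Matrix.det_fromBlocks_zero₂₁] at hU
  have hcc : !![c]ᵀ = !![c] := by ext i j; fin_cases i; fin_cases j; rfl
  simp [hcc] at hU
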